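/- Let (P_1+P_5)^b be the labelled bipartite graph consisting of one isolated black vertex together with a path on five vertices whose first, third and fifth vertices are black and whose second and fourth vertices are white, and let (P_1+2P_2)^b be the labelled bipartite graph consisting of one isolated black vertex together with two disjoint edges, each joining a black vertex to a white vertex. Let G be a bipartite graph with a bipartition (B, W) into independent sets such that |B| is odd and (P_1+P_5)^b is not a labelled induced subgraph of (B, W, E_G). Let X be the set of vertices of W that are adjacent to fewer than |B|/2 vertices of B, and let G_1 be the graph obtained from G by a bipartite complementation between X and B (replacing every edge with one endpoint in X and the other in B by a non-edge and vice versa). Then (P_1+2P_2)^b is not a labelled induced subgraph of (B, W, E_{G_1}). -/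

import Mathlib

open SimpleGraph

/-- `B` is the black colour class of a black-and-white labelling of `H`:
every edge of `H` joins a vertex of `B` to a vertex outside `B`
(equivalently, `B` and its complement `Bᶜ` are both independent sets,
i.e. `(B, Bᶜ)` is a bipartition of `H` into two possibly empty independent sets). -/
def IsBWLabelling {V : Type*} (H : SimpleGraph V) (B : Set V) : Prop :=
  ∀ ⦃u v : V⦄, H.Adj u v → (u ∈ B ↔ v ∉ B)

/-- `H` with black class `BH` is a labelled induced subgraph of `G` with black class `BG`:
there is an injective map preserving both adjacency and non-adjacency which maps
black vertices to black vertices and white vertices to white vertices. -/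
def LabelledIndSubgraph {VH VG : Type*} (H : SimpleGraph VH) (BH : Set VH)
    (G : SimpleGraph VG) (BG : Set VG) : Prop :=
  ∃ f : VH → VG, Function.Injective f ∧
    (∀ u v : VH, H.Adj u v ↔ G.Adj (f u) (f v)) ∧
    (∀ u : VH, u ∈ BH ↔ f u ∈ BG)

/-- `G` is strongly `H^ℓ`-free, where `BH` is the black class of the labelling `ℓ`:
there is no bipartition `(BG, BGᶜ)` of `G` such that `H^ℓ` is a labelled induced
subgraph of `(BG, BGᶜ, E_G)`. -/
def StronglyFree {VG VH : Type*} (G : SimpleGraph VG) (H : SimpleGraph VH)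
    (BH : Set VH) : Prop :=
  ¬ ∃ BG : Set VG, IsBWLabelling G BG ∧ LabelledIndSubgraph H BH G BG

/-- `G` is weakly `H^ℓ`-free, where `BH` is the black class of the labelling `ℓ`:
it is not the case that `H^ℓ` is a labelled induced subgraph of `(BG, BGᶜ, E_G)`
for every bipartition `(BG, BGᶜ)` of `G`. -/
def WeaklyFree {VG VH : Type*} (G : SimpleGraph VG) (H : SimpleGraph VH)
    (BH : Set VH) : Prop :=
  ¬ ∀ BG : Set VG, IsBWLabelling G BG → LabelledIndSubgraph H BH G BG

/-- `G` is `H`-free: `G` contains no induced subgraph isomorphic to `H`. -/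
def HFree {VG VH : Type*} (G : SimpleGraph VG) (H : SimpleGraph VH) : Prop :=
  ¬ ∃ f : VH → VG, Function.Injective f ∧ ∀ u v : VH, H.Adj u v ↔ G.Adj (f u) (f v)

/-- The graph obtained from `G` by a bipartite complementation between the disjoint
vertex subsets `X` and `Y`: every edge with one endpoint in `X` and the other in `Y`
is replaced by a non-edge and vice versa; all other adjacencies are unchanged. -/
def bipComplementation {V : Type*} (G : SimpleGraph V) (X Y : Set V) :
    SimpleGraph V where
  Adj u v :=
    (((u ∈ X ∧ v ∈ Y) ∨ (v ∈ X ∧ u ∈ Y)) ∧ u ≠ v ∧ ¬ G.Adj u v) ∨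
    (¬ ((u ∈ X ∧ v ∈ Y) ∨ (v ∈ X ∧ u ∈ Y)) ∧ G.Adj u v)
  symm := by
    refine ⟨fun u v h => ?_⟩
    rcases h with ⟨hc, hne, hna⟩ | ⟨hc, ha⟩
    · exact Or.inl ⟨hc.symm, hne.symm, fun h => hna h.symm⟩
    · exact Or.inr ⟨fun h => hc h.symm, ha.symm⟩
  loopless := by
    refine ⟨fun u h => ?_⟩
    rcases h with ⟨_, hne, _⟩ | ⟨_, ha⟩
    · exact hne rfl
    · exact G.irrefl ha

/-- The graph `P_1 + P_5`: an isolated vertex `0` and the path `1-2-3-4-5`.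
In the labelling `(P_1+P_5)^b` the vertices `0, 1, 3, 5` are black and the
vertices `2, 4` are white. -/
def gP1'P5 : SimpleGraph (Fin 6) :=
  SimpleGraph.fromEdgeSet {s(1, 2), s(2, 3), s(3, 4), s(4, 5)}

/-- The graph `P_1 + 2P_2`: an isolated vertex `0` and the two disjoint edges
`12` and `34`. In the labelling `(P_1+2P_2)^b` the vertices `0, 1, 3` are black
and the vertices `2, 4` are white. -/
def gP1'2P2 : SimpleGraph (Fin 5) := SimpleGraph.fromEdgeSet {s(1, 2), s(3, 4)}


section AuxStmt17

lemma aux17_common {V : Type*} [Fintype V] {B N1 N2 : Set V} (h1 : N1 ⊆ B) (h2 : N2 ⊆ B)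
    (c1 : B.ncard < 2 * N1.ncard) (c2 : B.ncard < 2 * N2.ncard) :
    (N1 ∩ N2).Nonempty := by
  rw [Set.nonempty_iff_ne_empty]
  intro h
  have hu : (N1 ∪ N2).ncard ≤ B.ncard :=
    Set.ncard_le_ncard (Set.union_subset h1 h2) (Set.toFinite B)
  have he := Set.ncard_union_add_ncard_inter N1 N2
  rw [h, Set.ncard_empty] at he
  omega

lemma aux17_avoid {V : Type*} [Fintype V] {B N1 N2 : Set V}
    (c1 : 2 * N1.ncard < B.ncard) (c2 : 2 * N2.ncard < B.ncard) :
    ∃ b ∈ B, b ∉ N1 ∧ b ∉ N2 := by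
  by_contra h
  push_neg at h
  have hsub : B ⊆ N1 ∪ N2 := by
    intro b hb
    rcases Classical.em (b ∈ N1) with h1 | h1
    · exact Or.inl h1
    · exact Or.inr (h b hb h1)
  have h1 := Set.ncard_le_ncard hsub (Set.toFinite _)
  have h2 := Set.ncard_union_le N1 N2
  omega

lemma aux17_diff {V : Type*} [Fintype V] {N1 N2 : Set V} {n : ℕ}
    (c1 : 2 * N1.ncard < n) (c2 : n < 2 * N2.ncard) :
    ∃ b ∈ N2, b ∉ N1 := by
  by_contra h
  push_neg at h
  have := Set.ncard_le_ncard h (Set.toFinite _)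
  omega

lemma aux17_buildP5 {V : Type*} (G : SimpleGraph V) (B : Set V) (hB : IsBWLabelling G B)
    (b0 b1 b3 b5 w2 w4 : V)
    (hb0 : b0 ∈ B) (hb1 : b1 ∈ B) (hb3 : b3 ∈ B) (hb5 : b5 ∈ B)
    (hw2 : w2 ∉ B) (hw4 : w4 ∉ B) (hww : w2 ≠ w4)
    (e12 : G.Adj b1 w2) (e23 : G.Adj w2 b3) (e34 : G.Adj b3 w4) (e45 : G.Adj w4 b5)
    (n02 : ¬ G.Adj b0 w2) (n04 : ¬ G.Adj b0 w4) (n14 : ¬ G.Adj b1 w4)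
    (n25 : ¬ G.Adj w2 b5) :
    LabelledIndSubgraph gP1'P5 ({0, 1, 3, 5} : Set (Fin 6)) G B := by
  have noBB : ∀ x ∈ B, ∀ y ∈ B, ¬ G.Adj x y := by
    intro x hx y hy h; exact ((hB h).1 hx) hy
  have noWW : ∀ x, x ∉ B → ∀ y, y ∉ B → ¬ G.Adj x y := by
    intro x hx y hy h; exact hx ((hB h).2 hy)
  have d01 : b0 ≠ b1 := fun h => n02 (h ▸ e12)
  have d03 : b0 ≠ b3 := fun h => n02 (h ▸ e23.symm)
  have d05 : b0 ≠ b5 := fun h => n04 (h ▸ e45.symm)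
  have d13 : b1 ≠ b3 := fun h => n14 (h ▸ e34)
  have d15 : b1 ≠ b5 := fun h => n14 (h ▸ e45.symm)
  have d35 : b3 ≠ b5 := fun h => n25 (h ▸ e23)
  have dbw : ∀ x ∈ B, ∀ y, y ∉ B → x ≠ y := fun x hx y hy h => hy (h ▸ hx)
  have m02 : b0 ≠ w2 := dbw _ hb0 _ hw2
  have m04 : b0 ≠ w4 := dbw _ hb0 _ hw4
  have m12 : b1 ≠ w2 := dbw _ hb1 _ hw2
  have m14 : b1 ≠ w4 := dbw _ hb1 _ hw4
  have m32 : b3 ≠ w2 := dbw _ hb3 _ hw2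
  have m34 : b3 ≠ w4 := dbw _ hb3 _ hw4
  have m52 : b5 ≠ w2 := dbw _ hb5 _ hw2
  have m54 : b5 ≠ w4 := dbw _ hb5 _ hw4
  refine ⟨![b0, b1, w2, b3, w4, b5], ?_, ?_, ?_⟩
  · intro u v h
    fin_cases u <;> fin_cases v <;> revert h <;> simp <;>
      first
        | assumption
        | exact fun h => absurd h.symm (by assumption)
  · have n20 := fun h => n02 (G.adj_symm h)
    have n40 := fun h => n04 (G.adj_symm h)
    have n41 := fun h => n14 (G.adj_symm h)
    have n52 := fun h => n25 (G.adj_symm h)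
    have e21 := e12.symm; have e32 := e23.symm; have e43 := e34.symm
    have e54 := e45.symm
    intro u v
    fin_cases u <;> fin_cases v <;>
      simp [gP1'P5, Sym2.eq_iff] <;>
      first
        | assumption
        | exact G.irrefl
        | exact noBB _ ‹_› _ ‹_›
        | exact noWW _ ‹_› _ ‹_›
  · intro u
    fin_cases u <;> simp <;> assumption

end AuxStmt17

/-- Let `G` be a bipartite graph with bipartition `(B, Bᶜ)` such that `|B|` is odd
and `(P_1+P_5)^b` is not a labelled induced subgraph of `(B, Bᶜ, E_G)`. Let `X` be
the set of white vertices adjacent to fewer than `|B|/2` vertices of `B`, and let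
`G₁` be obtained from `G` by a bipartite complementation between `X` and `B`. Then
`(P_1+2P_2)^b` is not a labelled induced subgraph of `(B, Bᶜ, E_{G₁})`. -/

theorem stmt_17 {V : Type*} [Fintype V] (G : SimpleGraph V) (B : Set V)
    (hB : IsBWLabelling G B) (hodd : Odd B.ncard)
    (hfree : ¬ LabelledIndSubgraph gP1'P5 ({0, 1, 3, 5} : Set (Fin 6)) G B)
    (X : Set V) (hX : X = {w | w ∉ B ∧ 2 * ({b ∈ B | G.Adj w b}).ncard < B.ncard})
    (G₁ : SimpleGraph V) (hG₁ : G₁ = bipComplementation G X B) :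
    ¬ LabelledIndSubgraph gP1'2P2 ({0, 1, 3} : Set (Fin 5)) G₁ B := by
  subst hG₁
  rintro ⟨f, finj, fadj, fcol⟩
  set N : V → Set V := fun w => {b ∈ B | G.Adj w b} with hN
  have hXw : ∀ x ∈ X, x ∉ B := by rw [hX]; exact fun x hx => hx.1
  have hNsub : ∀ w, N w ⊆ B := fun w b hb => hb.1
  have hNadj : ∀ w b, b ∈ B → G.Adj w b → b ∈ N w := fun w b hb ha => ⟨hb, ha⟩
  have hsmall : ∀ w ∈ X, 2 * (N w).ncard < B.ncard := by
    rw [hX]; exact fun w hw => hw.2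
  have hbigg : ∀ w, w ∉ B → w ∉ X → B.ncard < 2 * (N w).ncard := by
    intro w hwB hwX
    rw [hX] at hwX
    simp only [Set.mem_setOf_eq, not_and, not_lt] at hwX
    obtain ⟨k, hk⟩ := hodd
    have h2 : B.ncard ≤ 2 * (N w).ncard := hwX hwB
    omega
  -- unfolding the complementation adjacency
  have unfold : ∀ u v : V, (bipComplementation G X B).Adj u v ↔
      ((((u ∈ X ∧ v ∈ B) ∨ (v ∈ X ∧ u ∈ B)) ∧ u ≠ v ∧ ¬ G.Adj u v) ∨
        (¬ ((u ∈ X ∧ v ∈ B) ∨ (v ∈ X ∧ u ∈ B)) ∧ G.Adj u v)) := fun u v => Iff.rfl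
  have keyX : ∀ w b, w ∈ X → b ∈ B →
      ((bipComplementation G X B).Adj w b ↔ ¬ G.Adj w b) := by
    intro w b hw hb
    rw [unfold]
    constructor
    · rintro (⟨-, -, hna⟩ | ⟨hc, -⟩)
      · exact hna
      · exact absurd (Or.inl ⟨hw, hb⟩) hc
    · intro hna
      exact Or.inl ⟨Or.inl ⟨hw, hb⟩, fun h => (hXw w hw) (h ▸ hb), hna⟩
  have keyNX : ∀ w b, w ∉ B → w ∉ X → b ∈ B →
      ((bipComplementation G X B).Adj w b ↔ G.Adj w b) := by
    intro w b hwB hw hb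
    rw [unfold]
    constructor
    · rintro (⟨hc, -, -⟩ | ⟨-, ha⟩)
      · rcases hc with ⟨h1, -⟩ | ⟨-, h2⟩
        · exact absurd h1 hw
        · exact absurd h2 hwB
      · exact ha
    · intro ha
      refine Or.inr ⟨?_, ha⟩
      rintro (⟨h1, -⟩ | ⟨-, h2⟩)
      · exact hw h1
      · exact hwB h2
  -- the five vertices
  have haB : f 0 ∈ B := (fcol 0).1 (by simp)
  have hb1 : f 1 ∈ B := (fcol 1).1 (by simp)
  have hb2 : f 3 ∈ B := (fcol 3).1 (by simp)
  have hw1 : f 2 ∉ B := fun h => by have := (fcol 2).2 h; simp at this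
  have hw2 : f 4 ∉ B := fun h => by have := (fcol 4).2 h; simp at this
  have hww : f 2 ≠ f 4 := fun h => absurd (finj h) (by decide)
  -- adjacencies in G₁
  have E12 : (bipComplementation G X B).Adj (f 2) (f 1) :=
    ((fadj 1 2).1 (by simp [gP1'2P2])).symm
  have E34 : (bipComplementation G X B).Adj (f 4) (f 3) :=
    ((fadj 3 4).1 (by simp [gP1'2P2])).symm
  have N02 : ¬ (bipComplementation G X B).Adj (f 2) (f 0) := by
    intro h
    have := (fadj 0 2).2 h.symm
    simp [gP1'2P2, Sym2.eq_iff] at this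
  have N04 : ¬ (bipComplementation G X B).Adj (f 4) (f 0) := by
    intro h
    have := (fadj 0 4).2 h.symm
    simp [gP1'2P2, Sym2.eq_iff] at this
  have N14 : ¬ (bipComplementation G X B).Adj (f 4) (f 1) := by
    intro h
    have := (fadj 1 4).2 h.symm
    simp [gP1'2P2, Sym2.eq_iff] at this
  have N23 : ¬ (bipComplementation G X B).Adj (f 2) (f 3) := by
    intro h
    have := (fadj 2 3).2 h
    simp [gP1'2P2, Sym2.eq_iff] at this
  by_cases hc1 : f 2 ∈ X <;> by_cases hc2 : f 4 ∈ X
  · -- both in X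
    have gn12 : ¬ G.Adj (f 2) (f 1) := (keyX _ _ hc1 hb1).1 E12
    have gn34 : ¬ G.Adj (f 4) (f 3) := (keyX _ _ hc2 hb2).1 E34
    have ge02 : G.Adj (f 2) (f 0) := by
      by_contra h; exact N02 ((keyX _ _ hc1 haB).2 h)
    have ge04 : G.Adj (f 4) (f 0) := by
      by_contra h; exact N04 ((keyX _ _ hc2 haB).2 h)
    have ge14 : G.Adj (f 4) (f 1) := by
      by_contra h; exact N14 ((keyX _ _ hc2 hb1).2 h)
    have ge23 : G.Adj (f 2) (f 3) := by
      by_contra h; exact N23 ((keyX _ _ hc1 hb2).2 h)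
    obtain ⟨b0, hb0B, hn1, hn2⟩ :=
      aux17_avoid (hsmall _ hc1) (hsmall _ hc2)
    have gb01 : ¬ G.Adj b0 (f 2) := fun h => hn1 (hNadj _ _ hb0B h.symm)
    have gb02 : ¬ G.Adj b0 (f 4) := fun h => hn2 (hNadj _ _ hb0B h.symm)
    exact hfree (aux17_buildP5 G B hB b0 (f 1) (f 0) (f 3) (f 4) (f 2)
      hb0B hb1 haB hb2 hw2 hw1 hww.symm
      ge14.symm ge04 ge02.symm ge23
      gb02 gb01 (fun h => gn12 h.symm) gn34)
  · -- w1 ∈ X, w2 ∉ X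
    have gn12 : ¬ G.Adj (f 2) (f 1) := (keyX _ _ hc1 hb1).1 E12
    have ge34 : G.Adj (f 4) (f 3) := (keyNX _ _ hw2 hc2 hb2).1 E34
    have ge02 : G.Adj (f 2) (f 0) := by
      by_contra h; exact N02 ((keyX _ _ hc1 haB).2 h)
    have gn04 : ¬ G.Adj (f 4) (f 0) := fun h => N04 ((keyNX _ _ hw2 hc2 haB).2 h)
    have gn14 : ¬ G.Adj (f 4) (f 1) := fun h => N14 ((keyNX _ _ hw2 hc2 hb1).2 h)
    have ge23 : G.Adj (f 2) (f 3) := by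
      by_contra h; exact N23 ((keyX _ _ hc1 hb2).2 h)
    obtain ⟨b5, hb5N, hb5n⟩ :=
      aux17_diff (hsmall _ hc1) (hbigg _ hw2 hc2)
    have hb5B : b5 ∈ B := hNsub _ hb5N
    have ge45 : G.Adj (f 4) b5 := hb5N.2
    have gn25 : ¬ G.Adj (f 2) b5 := fun h => hb5n (hNadj _ _ hb5B h)
    exact hfree (aux17_buildP5 G B hB (f 1) (f 0) (f 3) b5 (f 2) (f 4)
      hb1 haB hb2 hb5B hw1 hw2 hww
      ge02.symm ge23 ge34.symm ge45
      (fun h => gn12 h.symm) (fun h => gn14 h.symm) (fun h => gn04 h.symm) gn25)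
  · -- w1 ∉ X, w2 ∈ X
    have ge12 : G.Adj (f 2) (f 1) := (keyNX _ _ hw1 hc1 hb1).1 E12
    have gn34 : ¬ G.Adj (f 4) (f 3) := (keyX _ _ hc2 hb2).1 E34
    have gn02 : ¬ G.Adj (f 2) (f 0) := fun h => N02 ((keyNX _ _ hw1 hc1 haB).2 h)
    have ge04 : G.Adj (f 4) (f 0) := by
      by_contra h; exact N04 ((keyX _ _ hc2 haB).2 h)
    have ge14 : G.Adj (f 4) (f 1) := by
      by_contra h; exact N14 ((keyX _ _ hc2 hb1).2 h)
    have gn23 : ¬ G.Adj (f 2) (f 3) := fun h => N23 ((keyNX _ _ hw1 hc1 hb2).2 h)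
    obtain ⟨b5, hb5N, hb5n⟩ :=
      aux17_diff (hsmall _ hc2) (hbigg _ hw1 hc1)
    have hb5B : b5 ∈ B := hNsub _ hb5N
    have ge45 : G.Adj (f 2) b5 := hb5N.2
    have gn45 : ¬ G.Adj (f 4) b5 := fun h => hb5n (hNadj _ _ hb5B h)
    exact hfree (aux17_buildP5 G B hB (f 3) (f 0) (f 1) b5 (f 4) (f 2)
      hb2 haB hb1 hb5B hw2 hw1 hww.symm
      ge04.symm ge14 ge12.symm ge45
      (fun h => gn34 h.symm) (fun h => gn23 h.symm) (fun h => gn02 h.symm) gn45)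
  · -- both ∉ X
    have ge12 : G.Adj (f 2) (f 1) := (keyNX _ _ hw1 hc1 hb1).1 E12
    have ge34 : G.Adj (f 4) (f 3) := (keyNX _ _ hw2 hc2 hb2).1 E34
    have gn02 : ¬ G.Adj (f 2) (f 0) := fun h => N02 ((keyNX _ _ hw1 hc1 haB).2 h)
    have gn04 : ¬ G.Adj (f 4) (f 0) := fun h => N04 ((keyNX _ _ hw2 hc2 haB).2 h)
    have gn14 : ¬ G.Adj (f 4) (f 1) := fun h => N14 ((keyNX _ _ hw2 hc2 hb1).2 h)
    have gn23 : ¬ G.Adj (f 2) (f 3) := fun h => N23 ((keyNX _ _ hw1 hc1 hb2).2 h)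
    obtain ⟨b3, hb3N1, hb3N2⟩ :=
      aux17_common (hNsub (f 2)) (hNsub (f 4)) (hbigg _ hw1 hc1) (hbigg _ hw2 hc2)
    have hb3B : b3 ∈ B := hNsub _ hb3N1
    exact hfree (aux17_buildP5 G B hB (f 0) (f 1) b3 (f 3) (f 2) (f 4)
      haB hb1 hb3B hb2 hw1 hw2 hww
      ge12.symm hb3N1.2.symm.symm hb3N2.2.symm ge34
      (fun h => gn02 h.symm) (fun h => gn04 h.symm) (fun h => gn14 h.symm) gn23)
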